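/- For nonnegative sorted weights h_1 ≥ ... ≥ h_m ≥ 0 and any vector δ ∈ ℝ^n with n ≥ m, the maximum of Σ_i Σ_j h_i δ_j X_{ij} over doubly substochastic matrices X ∈ [0,1]^{m×n} (row sums ≤ 1, column sums ≤ 1) equals Σ_{i=1}^m h_i max(δ_{(i)}, 0)... in the case all δ_j ≥ 0, it equals Σ_{i=1}^m h_i δ_{(i)}, where δ_{(1)} ≥ ... ≥ δ_{(n)} is the descending rearrangement of δ. In particular, the LP relaxation over fractional X attains its optimum at an integral (permutation-type) matrix. -/

import Mathlib

/-- Fractional feasible region: doubly substochastic `[0,1]` matrices. -/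
def feasF {m n : ℕ} (X : Matrix (Fin m) (Fin n) ℝ) : Prop :=
  (∀ i j, X i j ∈ Set.Icc (0:ℝ) 1) ∧ (∀ i, ∑ j, X i j ≤ 1) ∧ (∀ j, ∑ i, X i j ≤ 1)

/-- Abel-type inequality: if the partial sums of `a` are dominated by those of
`b`, and `h` is antitone nonnegative, then `∑ h a ≤ ∑ h b`. -/
lemma abel_ineq : ∀ (N : ℕ) (h a b : ℕ → ℝ),
    (∀ i j, i ≤ j → j < N → h j ≤ h i) → (∀ i, i < N → 0 ≤ h i) →
    (∀ k, k ≤ N → ∑ i ∈ Finset.range k, a i ≤ ∑ i ∈ Finset.range k, b i) →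
    ∑ i ∈ Finset.range N, h i * a i ≤ ∑ i ∈ Finset.range N, h i * b i := by
  intro N
  induction N with
  | zero => intro h a b _ _ _; simp
  | succ N ih =>
    intro h a b hmono hpos hps
    have hips := ih (fun i => h i - h N) a b
      (fun i j hij hj => by have := hmono i j hij (by omega); simp; linarith)
      (fun i hi => by have := hmono i N (by omega) (by omega); simp; linarith)
      (fun k hk => hps k (by omega))
    have hA := hps (N + 1) le_rfl
    have hhN : 0 ≤ h N := hpos N (by omega)
    have e1 : ∀ c : ℕ → ℝ, ∑ i ∈ Finset.range (N + 1), h i * c i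
        = ∑ i ∈ Finset.range N, (h i - h N) * c i
          + h N * ∑ i ∈ Finset.range (N + 1), c i := by
      intro c
      have h2 : ∑ i ∈ Finset.range (N + 1), (h i - h N) * c i
          = ∑ i ∈ Finset.range N, (h i - h N) * c i := by
        rw [Finset.sum_range_succ]; simp
      calc ∑ i ∈ Finset.range (N + 1), h i * c i
          = ∑ i ∈ Finset.range (N + 1), ((h i - h N) * c i + h N * c i) := by
            apply Finset.sum_congr rfl; intros; ring
        _ = _ := by rw [Finset.sum_add_distrib, h2, ← Finset.mul_sum]
    rw [e1 a, e1 b]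
    have := mul_le_mul_of_nonneg_left hA hhN
    linarith

/-- Core lemma: a `[0,1]`-valued vector with total mass `≤ k`, paired against a
nonnegative antitone vector `d`, yields at most the sum of the first `k`
entries of `d`. -/
lemma core_ineq {n : ℕ} (d Z : Fin n → ℝ) (k : ℕ)
    (hd : Antitone d) (hd0 : ∀ j, 0 ≤ d j)
    (hZ0 : ∀ j, 0 ≤ Z j) (hZ1 : ∀ j, Z j ≤ 1) (hZs : ∑ j, Z j ≤ (k : ℝ)) :
    ∑ j, d j * Z j ≤ ∑ j ∈ Finset.univ.filter (fun j : Fin n => (j : ℕ) < k), d j := by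
  by_cases hkn : k < n
  · set S := Finset.univ.filter (fun j : Fin n => (j : ℕ) < k) with hS
    set T := Finset.univ.filter (fun j : Fin n => ¬ (j : ℕ) < k) with hT
    have hsplit : ∀ c : Fin n → ℝ, ∑ j, c j = ∑ j ∈ S, c j + ∑ j ∈ T, c j := by
      intro c; rw [hS, hT, Finset.sum_filter_add_sum_filter_not]
    set t : ℝ := d ⟨k, hkn⟩ with ht
    have h1 : ∑ j ∈ T, d j * Z j ≤ t * ∑ j ∈ T, Z j := by
      rw [Finset.mul_sum]
      apply Finset.sum_le_sum
      intro j hj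
      have hjk : ¬ (j : ℕ) < k := by simpa [hT] using hj
      have : d j ≤ t := hd (by simp [Fin.le_def]; omega)
      exact mul_le_mul_of_nonneg_right this (hZ0 j)
    have hcard : S.card = k := by
      have : S = Finset.Iio (⟨k, hkn⟩ : Fin n) := by
        ext j; simp [hS, Finset.mem_Iio, Fin.lt_def]
      rw [this, Fin.card_Iio]
    have h2 : t * (↑k - ∑ j ∈ S, Z j) ≤ ∑ j ∈ S, (d j * (1 - Z j)) := by
      have : ∑ j ∈ S, (t * (1 - Z j)) ≤ ∑ j ∈ S, (d j * (1 - Z j)) := by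
        apply Finset.sum_le_sum
        intro j hj
        have hjk : (j : ℕ) < k := by simpa [hS] using hj
        have htd : t ≤ d j := hd (by simp [Fin.le_def]; omega)
        have : 0 ≤ 1 - Z j := by linarith [hZ1 j]
        exact mul_le_mul_of_nonneg_right htd this
      calc t * (↑k - ∑ j ∈ S, Z j) = ∑ j ∈ S, (t * (1 - Z j)) := by
            rw [← hcard]
            simp only [mul_sub, mul_one, Finset.sum_sub_distrib, Finset.sum_const,
              nsmul_eq_mul, Finset.mul_sum]
            ring
        _ ≤ _ := this
    have hTmass : ∑ j ∈ T, Z j ≤ ↑k - ∑ j ∈ S, Z j := by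
      have := hsplit Z; linarith
    have ht0 : 0 ≤ t := hd0 _
    have h3 : t * ∑ j ∈ T, Z j ≤ t * (↑k - ∑ j ∈ S, Z j) :=
      mul_le_mul_of_nonneg_left hTmass ht0
    have h4 : ∑ j ∈ S, (d j * (1 - Z j)) = ∑ j ∈ S, d j - ∑ j ∈ S, d j * Z j := by
      rw [← Finset.sum_sub_distrib]; apply Finset.sum_congr rfl; intros; ring
    rw [hsplit (fun j => d j * Z j)]
    linarith
  · have : Finset.univ.filter (fun j : Fin n => (j : ℕ) < k) = Finset.univ := by
      ext j; simp; omega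
    rw [this]
    apply Finset.sum_le_sum
    intro j _
    calc d j * Z j ≤ d j * 1 := mul_le_mul_of_nonneg_left (hZ1 j) (hd0 j)
      _ = d j := mul_one _

/-- The LP relaxation over doubly substochastic matrices of the rank-one
objective `h i * δ j` has optimum `∑_{i<m} h i * δ_(i)` (descending
rearrangement of `δ`, all `δ_j ≥ 0`), attained at an integral matrix. -/
theorem stmt1 {m n : ℕ} (hm : 0 < m) (hmn : m ≤ n)
    (h : Fin m → ℝ) (δ : Fin n → ℝ)
    (hdesc : Antitone h) (hnonneg : ∀ i, 0 ≤ h i) (δnonneg : ∀ j, 0 ≤ δ j)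
    (σ : Equiv.Perm (Fin n)) (hσ : Antitone fun j => δ (σ j))
    (Xstar : Matrix (Fin m) (Fin n) ℝ)
    (hX : Xstar = fun i j => if j = σ (Fin.castLE hmn i) then 1 else 0) :
    feasF Xstar ∧
      (∀ i j, Xstar i j = 0 ∨ Xstar i j = 1) ∧
      (∑ i, ∑ j, h i * δ j * Xstar i j = ∑ i : Fin m, h i * δ (σ (Fin.castLE hmn i))) ∧
      ∀ X, feasF X →
        ∑ i, ∑ j, h i * δ j * X i j ≤ ∑ i : Fin m, h i * δ (σ (Fin.castLE hmn i)) := by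
  subst hX
  refine ⟨⟨?_, ?_, ?_⟩, ?_, ?_, ?_⟩
  · intro i j
    by_cases hj : j = σ (Fin.castLE hmn i) <;> simp [hj]
  · intro i
    simp
  · intro j
    have hinj : Function.Injective (fun i : Fin m => σ (Fin.castLE hmn i)) :=
      σ.injective.comp (Fin.castLE_injective hmn)
    calc ∑ i : Fin m, (if j = σ (Fin.castLE hmn i) then (1:ℝ) else 0)
        = ((Finset.univ.filter fun i : Fin m => j = σ (Fin.castLE hmn i)).card : ℝ) := by
          rw [Finset.sum_boole]
      _ ≤ 1 := by
          norm_cast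
          apply Finset.card_le_one.2
          intro a ha b hb
          simp at ha hb
          exact hinj (ha.symm.trans hb)
  · intro i j
    by_cases hj : j = σ (Fin.castLE hmn i) <;> simp [hj]
  · apply Finset.sum_congr rfl
    intro i _
    simp [mul_ite, Finset.sum_ite_eq']
  · -- the upper bound
    intro X hXf
    obtain ⟨hbox, hrow, hcol⟩ := hXf
    -- ℕ-indexed versions
    set XN : ℕ → Fin n → ℝ := fun i j => if hi : i < m then X ⟨i, hi⟩ j else 0 with hXN
    set hN : ℕ → ℝ := fun i => if hi : i < m then h ⟨i, hi⟩ else 0 with hhN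
    set aN : ℕ → ℝ := fun i => ∑ j, δ j * XN i j with haN
    set bN : ℕ → ℝ := fun i => if hi : i < m then δ (σ (Fin.castLE hmn ⟨i, hi⟩)) else 0
      with hbN
    have key : ∑ i ∈ Finset.range m, hN i * aN i ≤ ∑ i ∈ Finset.range m, hN i * bN i := by
      apply abel_ineq
      · intro i j hij hjm
        simp only [hhN]
        rw [dif_pos hjm, dif_pos (lt_of_le_of_lt hij hjm)]
        exact hdesc (by exact hij)
      · intro i him
        simp only [hhN]; rw [dif_pos him]; exact hnonneg _
      · -- partial sums
        intro k hk
        set Y : Fin n → ℝ := fun j => ∑ i ∈ Finset.range k, XN i j with hY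
        have hXN0 : ∀ i j, 0 ≤ XN i j := by
          intro i j; simp only [hXN]
          split
          · exact (hbox _ j).1
          · exact le_refl 0
        have hY0 : ∀ j, 0 ≤ Y j := fun j => Finset.sum_nonneg fun i _ => hXN0 i j
        have hY1 : ∀ j, Y j ≤ 1 := by
          intro j
          have h1 : Y j ≤ ∑ i ∈ Finset.range m, XN i j := by
            apply Finset.sum_le_sum_of_subset_of_nonneg
            · exact Finset.range_subset_range.2 hk
            · intro i _ _; exact hXN0 i j
          have h2 : ∑ i ∈ Finset.range m, XN i j = ∑ i : Fin m, X i j := by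
            rw [← Fin.sum_univ_eq_sum_range (fun i => XN i j) m]
            apply Finset.sum_congr rfl
            intro i _
            simp [hXN, i.isLt]
          exact h1.trans (h2 ▸ hcol j)
        have hYs : ∑ j, Y j ≤ (k : ℝ) := by
          simp only [hY]
          rw [Finset.sum_comm]
          calc ∑ i ∈ Finset.range k, ∑ j, XN i j
              ≤ ∑ i ∈ Finset.range k, (1:ℝ) := by
                apply Finset.sum_le_sum
                intro i hi
                have him : i < m := lt_of_lt_of_le (Finset.mem_range.1 hi) hk
                simp only [hXN]
                calc ∑ j, (if hi : i < m then X ⟨i, hi⟩ j else 0)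
                    = ∑ j, X ⟨i, him⟩ j := by
                      apply Finset.sum_congr rfl; intros; rw [dif_pos him]
                  _ ≤ 1 := hrow _
            _ = (k : ℝ) := by simp
        have hLHS : ∑ i ∈ Finset.range k, aN i = ∑ j, δ (σ j) * Y (σ j) := by
          rw [Equiv.sum_comp σ (fun j => δ j * Y j)]
          simp only [haN, hY]
          rw [Finset.sum_comm]
          apply Finset.sum_congr rfl
          intro j _
          rw [Finset.mul_sum]
        have hcore := core_ineq (fun j => δ (σ j)) (fun j => Y (σ j)) k hσ
          (fun j => δnonneg _) (fun j => hY0 _) (fun j => hY1 _)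
          (by rw [Equiv.sum_comp σ Y]; exact hYs)
        have hRHS : ∑ j ∈ Finset.univ.filter (fun j : Fin n => (j : ℕ) < k), δ (σ j)
            = ∑ i ∈ Finset.range k, bN i := by
          apply Finset.sum_bij' (i := fun (j : Fin n) (_ : j ∈ _) => (j : ℕ))
            (j := fun (i : ℕ) (hi : i ∈ Finset.range k) => (⟨i, by
              have := Finset.mem_range.1 hi; omega⟩ : Fin n))
          case hi => intro a ha; simp at ha ⊢; exact ha
          case hj => intro a ha; simp at ha ⊢; exact ha
          case left_neg => intro a ha; rfl
          case right_neg => intro a ha; rfl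
          case h =>
            intro a ha
            have hak : (a : ℕ) < k := by simpa using ha
            have ham : (a : ℕ) < m := lt_of_lt_of_le hak hk
            simp only [hbN]
            rw [dif_pos ham]
            rfl
        rw [hLHS, ← hRHS]
        exact hcore
    have eL : ∑ i : Fin m, ∑ j, h i * δ j * X i j = ∑ i ∈ Finset.range m, hN i * aN i := by
      rw [← Fin.sum_univ_eq_sum_range (fun i => hN i * aN i) m]
      apply Finset.sum_congr rfl
      intro i _
      simp only [hhN, haN, hXN, dif_pos i.isLt, Fin.eta]
      rw [Finset.mul_sum]
      apply Finset.sum_congr rfl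
      intros; ring
    have eR : ∑ i : Fin m, h i * δ (σ (Fin.castLE hmn i)) = ∑ i ∈ Finset.range m, hN i * bN i := by
      rw [← Fin.sum_univ_eq_sum_range (fun i => hN i * bN i) m]
      apply Finset.sum_congr rfl
      intro i _
      simp only [hhN, hbN, dif_pos i.isLt, Fin.eta]
    rw [eL, eR]
    exact key
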